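/- The polynomial f_9(X) = 4·9⁴·X³ − (27·9⁴ − 288·9³ + 864·9²)·X − (27·9⁴ − 432·9³ + 2448·9² − 6912·9 + 10368) factors as f_9(X) = 81·(324X³ − 459X − 107), and the cubic 324X³ − 459X − 107 is irreducible over ℚ. Consequently, the x-coordinate of the first 9-division point of the tricuspoid has degree 3 over ℚ and is not a constructible number. -/

import Mathlib

open Real Polynomial

/-- A real number is constructible with straightedge and compass iff it can be
obtained from the rationals by field operations and taking square roots. -/
inductive IsConstructible : ℝ → Prop
  | rat (q : ℚ) : IsConstructible (q : ℝ)
  | add {a b : ℝ} : IsConstructible a → IsConstructible b → IsConstructible (a + b)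
  | neg {a : ℝ} : IsConstructible a → IsConstructible (-a)
  | mul {a b : ℝ} : IsConstructible a → IsConstructible b → IsConstructible (a * b)
  | inv {a : ℝ} : IsConstructible a → IsConstructible a⁻¹
  | sqrt {a : ℝ} : 0 ≤ a → IsConstructible a → IsConstructible (Real.sqrt a)

/-- The cubic `324X³ − 459X − 107` has no rational root (by reduction mod 5). -/
lemma tricuspoid_aux_no_rat_root (q : ℚ) : 324 * q ^ 3 - 459 * q - 107 ≠ 0 := by
  intro h
  have hd : (q.den : ℚ) ≠ 0 := by exact_mod_cast q.den_ne_zero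
  have hn : (q.num : ℚ) = q * q.den := (Rat.mul_den_eq_num q).symm
  have hz : (324 * q.num ^ 3 - 459 * q.num * (q.den : ℤ) ^ 2 - 107 * (q.den : ℤ) ^ 3 : ℤ) = 0 := by
    have : ((324 * q.num ^ 3 - 459 * q.num * (q.den : ℤ) ^ 2 - 107 * (q.den : ℤ) ^ 3 : ℤ) : ℚ) = 0 := by
      push_cast
      rw [hn]
      linear_combination (q.den : ℚ) ^ 3 * h
    exact_mod_cast this
  have h5 : (324 * (q.num : ZMod 5) ^ 3 - 459 * (q.num : ZMod 5) * (q.den : ZMod 5) ^ 2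
      - 107 * (q.den : ZMod 5) ^ 3 : ZMod 5) = 0 := by
    have := congrArg (fun z : ℤ => (z : ZMod 5)) hz
    push_cast at this
    convert this using 2
  have key : ∀ N D : ZMod 5, 324 * N ^ 3 - 459 * N * D ^ 2 - 107 * D ^ 3 = 0 → N = 0 ∧ D = 0 := by
    decide
  obtain ⟨hN, hD⟩ := key _ _ h5
  have h5n : (5 : ℤ) ∣ q.num := by exact_mod_cast (ZMod.intCast_zmod_eq_zero_iff_dvd q.num 5).mp hN
  have h5d : (5 : ℕ) ∣ q.den := by
    exact_mod_cast (ZMod.natCast_eq_zero_iff q.den 5).mp (by exact_mod_cast hD)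
  have h5n' : (5 : ℕ) ∣ q.num.natAbs := by
    have := Int.natAbs_dvd_natAbs.mpr h5n
    simpa using this
  have hcop := q.reduced
  have : (5 : ℕ) ∣ 1 := hcop ▸ Nat.dvd_gcd h5n' h5d
  omega

/-- The cubic `324X³ − 459X − 107` is irreducible over `ℚ`. -/
lemma tricuspoid_aux_cubic_irred : Irreducible (C (324 : ℚ) * X ^ 3 - C 459 * X - C 107) := by
  set p : ℚ[X] := C (324 : ℚ) * X ^ 3 - C 459 * X - C 107 with hp
  have hdeg : p.natDegree = 3 := by
    unfold p
    compute_degree!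
  rw [irreducible_iff_roots_eq_zero_of_degree_le_three (by omega) (by omega)]
  have hp0 : p ≠ 0 := fun h => by simp [h] at hdeg
  rw [Multiset.eq_zero_iff_forall_notMem]
  intro a ha
  rw [mem_roots hp0] at ha
  have := ha
  unfold p at this
  simp only [IsRoot, eval_sub, eval_mul, eval_C, eval_pow, eval_X] at this
  exact tricuspoid_aux_no_rat_root a (by linarith)

/-- Every constructible real lies in a subfield of `ℝ` of `2`-power degree over `ℚ`
(and such a field can be chosen over any given one of `2`-power degree). -/
lemma tricuspoid_aux_constructible_mem {a : ℝ} (h : IsConstructible a) :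
    ∀ K : IntermediateField ℚ ℝ, (∃ n, Module.finrank ℚ K = 2 ^ n) →
    ∃ L : IntermediateField ℚ ℝ, K ≤ L ∧ a ∈ L ∧ ∃ m, Module.finrank ℚ L = 2 ^ m := by
  induction h with
  | rat q => exact fun K hK => ⟨K, le_refl _, K.algebraMap_mem q, hK⟩
  | add ha hb iha ihb =>
      intro K hK
      obtain ⟨L1, hKL1, haL1, hL1⟩ := iha K hK
      obtain ⟨L2, hL1L2, hbL2, hL2⟩ := ihb L1 hL1
      exact ⟨L2, le_trans hKL1 hL1L2, L2.add_mem (hL1L2 haL1) hbL2, hL2⟩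
  | neg ha iha =>
      intro K hK
      obtain ⟨L, hKL, haL, hL⟩ := iha K hK
      exact ⟨L, hKL, L.neg_mem haL, hL⟩
  | mul ha hb iha ihb =>
      intro K hK
      obtain ⟨L1, hKL1, haL1, hL1⟩ := iha K hK
      obtain ⟨L2, hL1L2, hbL2, hL2⟩ := ihb L1 hL1
      exact ⟨L2, le_trans hKL1 hL1L2, L2.mul_mem (hL1L2 haL1) hbL2, hL2⟩
  | inv ha iha =>
      intro K hK
      obtain ⟨L, hKL, haL, hL⟩ := iha K hK
      exact ⟨L, hKL, L.inv_mem haL, hL⟩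
  | @sqrt a ha0 ha iha =>
      intro K hK
      obtain ⟨L, hKL, haL, m, hL⟩ := iha K hK
      have hfinL : FiniteDimensional ℚ L :=
        FiniteDimensional.of_finrank_pos (by rw [hL]; positivity)
      set s : ℝ := Real.sqrt a with hs
      have hint : IsIntegral L s := by
        refine ⟨X ^ 2 - C (⟨a, haL⟩ : L), monic_X_pow_sub_C _ (by norm_num), ?_⟩
        simp only [eval₂_sub, eval₂_X_pow, eval₂_C]
        rw [show (algebraMap L ℝ) (⟨a, haL⟩ : L) = a from rfl]
        rw [Real.sq_sqrt ha0]; ring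
      set M : IntermediateField L ℝ := IntermediateField.adjoin L {s} with hM
      have hfinM : FiniteDimensional L M := IntermediateField.adjoin.finiteDimensional hint
      have hdM : Module.finrank L M = (minpoly L s).natDegree :=
        IntermediateField.adjoin.finrank hint
      have hdle : (minpoly L s).natDegree ≤ 2 := by
        have hne : (X ^ 2 - C (⟨a, haL⟩ : L) : Polynomial L) ≠ 0 := by
          intro hc
          have := congrArg natDegree hc
          rw [natDegree_X_pow_sub_C] at this
          simp at this
        have hroot : Polynomial.aeval s (X ^ 2 - C (⟨a, haL⟩ : L) : Polynomial L) = 0 := by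
          simp only [aeval_def, eval₂_sub, eval₂_X_pow, eval₂_C]
          rw [show (algebraMap L ℝ) (⟨a, haL⟩ : L) = a from rfl]
          rw [Real.sq_sqrt ha0]; ring
        have hle := minpoly.degree_le_of_ne_zero L s hne hroot
        rw [degree_X_pow_sub_C (by norm_num) _] at hle
        exact natDegree_le_iff_degree_le.mpr (by exact_mod_cast hle)
      have hdpos : 0 < (minpoly L s).natDegree := minpoly.natDegree_pos hint
      refine ⟨M.restrictScalars ℚ, ?_, ?_, ?_⟩
      · refine le_trans hKL ?_
        intro y hy
        exact (IntermediateField.mem_restrictScalars ℚ).mpr (M.algebraMap_mem ⟨y, hy⟩)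
      · exact (IntermediateField.mem_restrictScalars ℚ).mpr
          (IntermediateField.mem_adjoin_simple_self L s)
      · have htower : Module.finrank ℚ (M.restrictScalars ℚ) =
            Module.finrank ℚ L * Module.finrank L M :=
          Module.finrank_mul_finrank ℚ (↥L) (↥M) |>.symm
        rw [htower, hL, hdM]
        interval_cases hdd : (minpoly L s).natDegree
        · exact ⟨m, by norm_num⟩
        · exact ⟨m + 1, by rw [pow_succ]⟩

/-- Derivative vector of the tricuspoid parametrization. -/
noncomputable def tricuspoidSpeedVec (ψ : ℝ) : EuclideanSpace ℝ (Fin 2) :=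
  WithLp.toLp 2 ![-2 * Real.sin ψ - 2 * Real.sin (2 * ψ), 2 * Real.cos ψ - 2 * Real.cos (2 * ψ)]

lemma tricuspoid_aux_hasDerivAt (γ : ℝ → EuclideanSpace ℝ (Fin 2))
    (hγ : ∀ φ : ℝ, γ φ = ![2 * Real.cos φ + Real.cos (2 * φ),
          2 * Real.sin φ - Real.sin (2 * φ)]) (ψ : ℝ) :
    HasDerivAt γ (tricuspoidSpeedVec ψ) ψ := by
  have hfun : γ = fun φ => (EuclideanSpace.equiv (Fin 2) ℝ).symm
      ![2 * Real.cos φ + Real.cos (2 * φ), 2 * Real.sin φ - Real.sin (2 * φ)] := by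
    funext φ; rw [← hγ φ]; rfl
  rw [hfun]
  have h1 : HasDerivAt (fun φ : ℝ => 2 * Real.cos φ + Real.cos (2 * φ))
      (-2 * Real.sin ψ - 2 * Real.sin (2 * ψ)) ψ := by
    have := ((Real.hasDerivAt_cos ψ).const_mul 2).add
      ((Real.hasDerivAt_cos (2*ψ)).comp ψ ((hasDerivAt_id ψ).const_mul 2))
    exact this.congr_deriv (by ring)
  have h2 : HasDerivAt (fun φ : ℝ => 2 * Real.sin φ - Real.sin (2 * φ))
      (2 * Real.cos ψ - 2 * Real.cos (2 * ψ)) ψ := by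
    have := ((Real.hasDerivAt_sin ψ).const_mul 2).sub
      ((Real.hasDerivAt_sin (2*ψ)).comp ψ ((hasDerivAt_id ψ).const_mul 2))
    exact this.congr_deriv (by ring)
  have hp : HasDerivAt (fun φ : ℝ => (![2 * Real.cos φ + Real.cos (2 * φ),
      2 * Real.sin φ - Real.sin (2 * φ)] : Fin 2 → ℝ))
      (![-2 * Real.sin ψ - 2 * Real.sin (2 * ψ), 2 * Real.cos ψ - 2 * Real.cos (2 * ψ)]) ψ := by
    rw [hasDerivAt_pi]
    intro i
    fin_cases i
    · simpa using h1
    · simpa using h2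
  exact ((EuclideanSpace.equiv (Fin 2) ℝ).symm.toContinuousLinearMap.hasFDerivAt).comp_hasDerivAt ψ hp

lemma tricuspoid_aux_norm (ψ : ℝ) :
    ‖tricuspoidSpeedVec ψ‖ = Real.sqrt (8 - 8 * Real.cos (3 * ψ)) := by
  rw [EuclideanSpace.norm_eq]
  congr 1
  rw [Fin.sum_univ_two]
  simp only [tricuspoidSpeedVec, Matrix.cons_val_zero, Matrix.cons_val_one, Matrix.head_cons,
    Real.norm_eq_abs, sq_abs, PiLp.toLp_apply]
  have h3 : Real.cos (3 * ψ) = Real.cos (2 * ψ) * Real.cos ψ - Real.sin (2 * ψ) * Real.sin ψ := by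
    rw [show (3:ℝ) * ψ = 2 * ψ + ψ by ring, Real.cos_add]
  have p1 : Real.sin ψ ^ 2 + Real.cos ψ ^ 2 = 1 := Real.sin_sq_add_cos_sq ψ
  have p2 : Real.sin (2*ψ) ^ 2 + Real.cos (2*ψ) ^ 2 = 1 := Real.sin_sq_add_cos_sq (2*ψ)
  nlinarith [p1, p2]

lemma tricuspoid_aux_cos_val (φ : ℝ) (h0 : 0 ≤ φ) (h1 : φ ≤ 2 * π / 3)
    (hint : (∫ ψ in (0:ℝ)..φ, Real.sqrt (8 - 8 * Real.cos (3 * ψ))) = 16 / 9) :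
    Real.cos (3 * φ / 2) = 1 / 3 := by
  have heq : ∀ ψ ∈ Set.uIcc (0:ℝ) φ,
      Real.sqrt (8 - 8 * Real.cos (3 * ψ)) = 4 * Real.sin (3 / 2 * ψ) := by
    intro ψ hψ
    rw [Set.uIcc_of_le h0] at hψ
    have hψ0 : 0 ≤ ψ := hψ.1
    have hψ1 : ψ ≤ 2 * π / 3 := le_trans hψ.2 h1
    have hs : 0 ≤ Real.sin (3 / 2 * ψ) := by
      apply Real.sin_nonneg_of_nonneg_of_le_pi
      · positivity
      · nlinarith [Real.pi_pos]
    have hcos : Real.cos (3 * ψ) = 1 - 2 * Real.sin (3 / 2 * ψ) ^ 2 := by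
      rw [show (3:ℝ) * ψ = 2 * (3 / 2 * ψ) by ring, Real.cos_two_mul,
        ← Real.sin_sq_add_cos_sq (3 / 2 * ψ)]
      ring
    rw [hcos, show 8 - 8 * (1 - 2 * Real.sin (3 / 2 * ψ) ^ 2) = (4 * Real.sin (3/2*ψ))^2 by ring]
    exact Real.sqrt_sq (by positivity)
  rw [intervalIntegral.integral_congr heq] at hint
  have hval : (∫ ψ in (0:ℝ)..φ, 4 * Real.sin (3 / 2 * ψ))
      = 4 * (2/3) * (1 - Real.cos (3/2 * φ)) := by
    rw [intervalIntegral.integral_const_mul]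
    rw [intervalIntegral.integral_comp_mul_left (fun x => Real.sin x) (by norm_num : (3/2:ℝ) ≠ 0)]
    rw [integral_sin]
    norm_num
    ring
  rw [hval] at hint
  have : Real.cos (3 / 2 * φ) = 1/3 := by linarith
  rw [show 3 * φ / 2 = 3/2 * φ by ring]
  exact this

lemma tricuspoid_aux_root (φ x : ℝ) (hc : Real.cos (3 * φ / 2) = 1 / 3)
    (hx : x = 2 * Real.cos φ + Real.cos (2 * φ)) :
    324 * x ^ 3 - 459 * x - 107 = 0 := by
  set u := Real.cos (φ / 2) with hu
  have h3 : 4 * u ^ 3 - 3 * u = 1 / 3 := by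
    rw [← hc, show 3 * φ / 2 = 3 * (φ / 2) by ring, Real.cos_three_mul]
  have hcosφ : Real.cos φ = 2 * u ^ 2 - 1 := by
    rw [show φ = 2 * (φ / 2) by ring, Real.cos_two_mul]
  have hcos2φ : Real.cos (2 * φ) = 2 * Real.cos φ ^ 2 - 1 := Real.cos_two_mul φ
  have hx2 : x = 8 * u ^ 4 - 4 * u ^ 2 - 1 := by
    rw [hx, hcos2φ, hcosφ]; ring
  rw [hx2]
  linear_combination 3 * (13824 * u ^ 9 - 10368 * u ^ 7 + 1152 * u ^ 6 - 2592 * u ^ 5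
    + 1608 * u ^ 3 - 216 * u ^ 2 + 252 * u - 28) * h3

/-- `f₉` factors as `81(324X³ − 459X − 107)`, with `324X³ − 459X − 107`
irreducible over `ℚ`; consequently the `x`-coordinate of the first `9`-division
point of the tricuspoid has degree `3` over `ℚ` and is not constructible. -/
theorem tricuspoid_nine_division_point_not_constructible
    (f₉ : Polynomial ℚ)
    (hf : f₉ = C (4 * (9 : ℚ) ^ 4) * X ^ 3
      - C (27 * (9 : ℚ) ^ 4 - 288 * (9 : ℚ) ^ 3 + 864 * (9 : ℚ) ^ 2) * X
      - C (27 * (9 : ℚ) ^ 4 - 432 * (9 : ℚ) ^ 3 + 2448 * (9 : ℚ) ^ 2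
            - 6912 * (9 : ℚ) + 10368)) :
    f₉ = C 81 * (C 324 * X ^ 3 - C 459 * X - C 107) ∧
    Irreducible (C (324 : ℚ) * X ^ 3 - C 459 * X - C 107) ∧
    ∀ (γ : ℝ → EuclideanSpace ℝ (Fin 2)),
      (∀ φ : ℝ, γ φ =
        ![2 * Real.cos φ + Real.cos (2 * φ),
          2 * Real.sin φ - Real.sin (2 * φ)]) →
      ∀ φ : ℝ, 0 ≤ φ → φ ≤ 2 * π / 3 →
        (∫ ψ in (0 : ℝ)..φ, ‖deriv γ ψ‖) = 16 / 9 →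
        ∀ x : ℝ, x = 2 * Real.cos φ + Real.cos (2 * φ) →
          (minpoly ℚ x).natDegree = 3 ∧ ¬ IsConstructible x := by
  refine ⟨?_, tricuspoid_aux_cubic_irred, ?_⟩
  · rw [hf]
    norm_num
    simp only [map_ofNat]
    ring
  · intro γ hγ φ h0 h1 hint x hx
    -- compute the integrand
    have hderiv : ∀ ψ : ℝ, deriv γ ψ = tricuspoidSpeedVec ψ :=
      fun ψ => (tricuspoid_aux_hasDerivAt γ hγ ψ).deriv
    have hint' : (∫ ψ in (0:ℝ)..φ, Real.sqrt (8 - 8 * Real.cos (3 * ψ))) = 16 / 9 := by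
      rw [← hint]
      congr 1
      funext ψ
      rw [hderiv ψ, tricuspoid_aux_norm ψ]
    have hc := tricuspoid_aux_cos_val φ h0 h1 hint'
    have hroot := tricuspoid_aux_root φ x hc hx
    -- degree of the minimal polynomial
    set p : ℚ[X] := C (324 : ℚ) * X ^ 3 - C 459 * X - C 107 with hp
    have hirr : Irreducible p := tricuspoid_aux_cubic_irred
    have haeval : Polynomial.aeval x p = 0 := by
      simp only [hp, map_sub, map_mul, aeval_C, aeval_X, map_pow, map_ofNat]
      linarith
    have hdeg3 : (minpoly ℚ x).natDegree = 3 := by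
      have hdeg : p.natDegree = 3 := by rw [hp]; compute_degree!
      have hlc : p.leadingCoeff ≠ 0 := leadingCoeff_ne_zero.mpr hirr.ne_zero
      rw [← minpoly.eq_of_irreducible hirr haeval, natDegree_mul_C (inv_ne_zero hlc), hdeg]
    refine ⟨hdeg3, ?_⟩
    have hxint : IsIntegral ℚ x :=
      (isAlgebraic_iff_isIntegral (K := ℚ)).mp ⟨p, hirr.ne_zero, haeval⟩
    intro hC
    obtain ⟨L, _, hxL, m, hL⟩ := tricuspoid_aux_constructible_mem hC ⊥
      ⟨0, by simp [IntermediateField.finrank_bot]⟩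
    have hfin : FiniteDimensional ℚ L := FiniteDimensional.of_finrank_pos (by rw [hL]; positivity)
    set x' : L := ⟨x, hxL⟩ with hx'
    have hmap : algebraMap L ℝ x' = x := rfl
    have hint'' : IsIntegral ℚ x' := by
      rw [← isIntegral_algebraMap_iff (algebraMap (↥L) ℝ).injective, hmap]; exact hxint
    have hdvd : (minpoly ℚ x').natDegree ∣ Module.finrank ℚ L := minpoly.degree_dvd hint''
    have hmp : minpoly ℚ x' = minpoly ℚ x := by
      rw [← hmap]; exact (minpoly.algebraMap_eq (algebraMap (↥L) ℝ).injective x').symm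
    rw [hmp, hdeg3, hL] at hdvd
    have h32 : (3 : ℕ) ∣ 2 := Nat.Prime.dvd_of_dvd_pow (by norm_num) hdvd
    omega
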